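/- Deterministic core of Theorem 1(b) (refinement for K > K₀): Let n ≥ 1 be an integer, d : {1,…,n}² → ℝ symmetric, and let {G₁,…,G_{K₀}} be a partition of {1,…,n} into K₀ nonempty groups that is d-separated. Then, for every choice of tie-breaking at each step and for every integer K with K₀ < K ≤ n, the HAC partition P^{n−K} into K clusters is a refinement of {G₁,…,G_{K₀}}. -/
import Mathlib


open Finset

/-- Complete-linkage dissimilarity `Δ(S,S') = max_{i ∈ S, j ∈ S'} d i j`, as an
extended real (so that the value over an empty index set is `⊥`). -/
noncomputable def cLink {n : ℕ} (d : Fin n → Fin n → ℝ) (S S' : Finset (Fin n)) : EReal :=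
  sSup {x : EReal | ∃ i ∈ S, ∃ j ∈ S', x = (d i j : EReal)}

/-- Within-cluster dissimilarity `Δ(C) = max_{i,j ∈ C, i ≠ j} d i j`, as an extended real;
for a singleton (or empty) cluster the value is `⊥`, which is smaller than every real. -/
noncomputable def cDiam {n : ℕ} (d : Fin n → Fin n → ℝ) (C : Finset (Fin n)) : EReal :=
  sSup {x : EReal | ∃ i ∈ C, ∃ j ∈ C, i ≠ j ∧ x = (d i j : EReal)}

/-- The initial partition of `{1,…,n}` into `n` singleton clusters. -/
def singletonPartition (n : ℕ) : Finset (Finset (Fin n)) :=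
  Finset.univ.image fun i : Fin n => ({i} : Finset (Fin n))

/-- `Q` is obtained from `P` by merging one pair of distinct clusters attaining the
minimum of the complete-linkage dissimilarity `Δ` over all pairs of distinct clusters. -/
def IsMergeStep {n : ℕ} (d : Fin n → Fin n → ℝ) (P Q : Finset (Finset (Fin n))) : Prop :=
  ∃ C ∈ P, ∃ C' ∈ P, C ≠ C' ∧
    (∀ D ∈ P, ∀ D' ∈ P, D ≠ D' → cLink d C C' ≤ cLink d D D') ∧
    Q = insert (C ∪ C') ((P.erase C).erase C')

/-- A run of the complete-linkage HAC algorithm (with an arbitrary choice of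
tie-breaking at each step): `P 0` is the singleton partition and for every
`r < n - 1`, `P (r+1)` is obtained from `P r` by a merge step. -/
def IsHACChain {n : ℕ} (d : Fin n → Fin n → ℝ) (P : ℕ → Finset (Finset (Fin n))) : Prop :=
  P 0 = singletonPartition n ∧ ∀ r, r < n - 1 → IsMergeStep d (P r) (P (r + 1))

/-- `G` is a partition of `{1,…,n}` into `K₀` nonempty groups. -/
def IsGroupPartition {n K₀ : ℕ} (G : Fin K₀ → Finset (Fin n)) : Prop :=
  (∀ k, (G k).Nonempty) ∧ (∀ i : Fin n, ∃ k, i ∈ G k) ∧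
    ∀ k k' : Fin K₀, k ≠ k' → Disjoint (G k) (G k')

/-- The partition `G` is `d`-separated: every within-group distance is strictly smaller
than every between-group distance (vacuously true when `K₀ = 1`). -/
def IsSeparated {n K₀ : ℕ} (d : Fin n → Fin n → ℝ) (G : Fin K₀ → Finset (Fin n)) : Prop :=
  ∀ k : Fin K₀, ∀ i ∈ G k, ∀ j ∈ G k, i ≠ j →
    ∀ k₁ k₂ : Fin K₀, k₁ ≠ k₂ → ∀ a ∈ G k₁, ∀ b ∈ G k₂, d i j < d a b

/-- `A` is a refinement of `B`: every element of `A` is a subset of some element of `B`. -/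
def IsRefinement {n : ℕ} (A B : Finset (Finset (Fin n))) : Prop :=
  ∀ C ∈ A, ∃ D ∈ B, C ⊆ D

lemma cLink_set_finite {n : ℕ} (d : Fin n → Fin n → ℝ) (S S' : Finset (Fin n)) :
    {x : EReal | ∃ i ∈ S, ∃ j ∈ S', x = (d i j : EReal)}.Finite := by
  apply Set.Finite.subset (Set.finite_range fun p : Fin n × Fin n => (d p.1 p.2 : EReal))
  rintro x ⟨i, hi, j, hj, rfl⟩
  exact ⟨(i, j), rfl⟩

lemma cLink_eq {n : ℕ} (d : Fin n → Fin n → ℝ) {S S' : Finset (Fin n)}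
    (hS : S.Nonempty) (hS' : S'.Nonempty) :
    ∃ i ∈ S, ∃ j ∈ S', cLink d S S' = (d i j : EReal) := by
  have hne : {x : EReal | ∃ i ∈ S, ∃ j ∈ S', x = (d i j : EReal)}.Nonempty := by
    obtain ⟨i, hi⟩ := hS; obtain ⟨j, hj⟩ := hS'
    exact ⟨(d i j : EReal), i, hi, j, hj, rfl⟩
  obtain ⟨i, hi, j, hj, h⟩ := hne.csSup_mem (cLink_set_finite d S S')
  exact ⟨i, hi, j, hj, h⟩

lemma le_cLink {n : ℕ} (d : Fin n → Fin n → ℝ) {S S' : Finset (Fin n)}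
    {i j : Fin n} (hi : i ∈ S) (hj : j ∈ S') :
    (d i j : EReal) ≤ cLink d S S' :=
  le_sSup ⟨i, hi, j, hj, rfl⟩

/-- The invariant maintained along a HAC chain. -/
def GoodPart {n K₀ : ℕ} (G : Fin K₀ → Finset (Fin n))
    (P : Finset (Finset (Fin n))) : Prop :=
  (∀ C ∈ P, C.Nonempty) ∧ (∀ i : Fin n, ∃ C ∈ P, i ∈ C) ∧
    (∀ A ∈ P, ∀ B ∈ P, A ≠ B → Disjoint A B) ∧
    (∀ C ∈ P, ∃ k, C ⊆ G k)

lemma goodPart_singleton {n K₀ : ℕ} (G : Fin K₀ → Finset (Fin n))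
    (hG : IsGroupPartition G) :
    GoodPart G (singletonPartition n) ∧ (singletonPartition n).card = n := by
  constructor
  · refine ⟨?_, ?_, ?_, ?_⟩
    · intro C hC
      simp only [singletonPartition, mem_image, mem_univ, true_and] at hC
      obtain ⟨i, rfl⟩ := hC
      exact ⟨i, mem_singleton_self i⟩
    · intro i
      exact ⟨{i}, by simp [singletonPartition], mem_singleton_self i⟩
    · intro A hA B hB hAB
      simp only [singletonPartition, mem_image, mem_univ, true_and] at hA hB
      obtain ⟨i, rfl⟩ := hA; obtain ⟨j, rfl⟩ := hB
      simp only [Finset.disjoint_singleton]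
      intro h; exact hAB (by rw [h])
    · intro C hC
      simp only [singletonPartition, mem_image, mem_univ, true_and] at hC
      obtain ⟨i, rfl⟩ := hC
      obtain ⟨k, hk⟩ := hG.2.1 i
      exact ⟨k, singleton_subset_iff.mpr hk⟩
  · rw [singletonPartition, Finset.card_image_of_injective _ ?_, Finset.card_univ, Fintype.card_fin]
    intro i j h
    simpa using h

lemma goodPart_merge {n K₀ : ℕ} (d : Fin n → Fin n → ℝ)
    (G : Fin K₀ → Finset (Fin n)) (hG : IsGroupPartition G)
    (hsep : IsSeparated d G)
    (P Q : Finset (Finset (Fin n))) (hgood : GoodPart G P)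
    (hcard : K₀ < P.card) (hmerge : IsMergeStep d P Q) :
    GoodPart G Q ∧ Q.card = P.card - 1 := by
  obtain ⟨hne, hcov, hdisj, href⟩ := hgood
  obtain ⟨C, hC, C', hC', hCC', hmin, rfl⟩ := hmerge
  -- a default group index
  have hK₀pos : ∃ k : Fin K₀, True := by
    obtain ⟨k, _⟩ := hG.2.1 ⟨0, by
      rcases Nat.eq_zero_or_pos n with h | h
      · subst h; exact absurd C.nonempty_of_ne_empty (by
          intro _
          exact absurd (hne C hC) (by simp [Finset.eq_empty_of_isEmpty C]))
      · exact h⟩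
    exact ⟨k, trivial⟩
  obtain ⟨k₀, -⟩ := hK₀pos
  -- pigeonhole: two distinct clusters of P lie in a common group
  set f : Finset (Fin n) → Fin K₀ := fun S =>
    if h : ∃ k, S ⊆ G k then h.choose else k₀ with hf
  have hmaps : ∀ S ∈ P, f S ∈ (Finset.univ : Finset (Fin K₀)) := fun _ _ => mem_univ _
  obtain ⟨D, hD, D', hD', hDD', hfeq⟩ :=
    Finset.exists_ne_map_eq_of_card_lt_of_maps_to
      (by simpa using hcard) hmaps
  have hDsub : D ⊆ G (f D) := by
    have h : ∃ k, D ⊆ G k := href D hD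
    simp only [hf, dif_pos h]
    exact h.choose_spec
  have hD'sub : D' ⊆ G (f D) := by
    have h : ∃ k, D' ⊆ G k := href D' hD'
    rw [hfeq]
    simp only [hf, dif_pos h]
    exact h.choose_spec
  -- key claim: C ∪ C' is contained in a single group
  obtain ⟨k₁, hk₁⟩ := href C hC
  obtain ⟨k₂, hk₂⟩ := href C' hC'
  have hsame : k₁ = k₂ := by
    by_contra hk
    obtain ⟨i₀, hi₀⟩ := hne C hC
    obtain ⟨j₀, hj₀⟩ := hne C' hC'
    obtain ⟨i, hi, j, hj, heq⟩ := cLink_eq d (hne D hD) (hne D' hD')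
    have hij : i ≠ j := by
      intro h; subst h
      exact (Finset.disjoint_left.mp (hdisj D hD D' hD' hDD') hi) hj
    have hlt : d i j < d i₀ j₀ :=
      hsep (f D) i (hDsub hi) j (hD'sub hj) hij k₁ k₂ hk i₀ (hk₁ hi₀) j₀ (hk₂ hj₀)
    have h1 : (d i₀ j₀ : EReal) ≤ cLink d C C' := le_cLink d hi₀ hj₀
    have h2 : cLink d C C' ≤ cLink d D D' := hmin D hD D' hD' hDD'
    have h3 : cLink d D D' < (d i₀ j₀ : EReal) := by
      rw [heq]; exact_mod_cast hlt
    exact absurd (h1.trans h2) (not_le.mpr h3)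
  subst hsame
  have hUsub : C ∪ C' ⊆ G k₁ := Finset.union_subset hk₁ hk₂
  have hC'e : C' ∈ P.erase C := Finset.mem_erase.mpr ⟨fun h => hCC' h.symm, hC'⟩
  -- C ∪ C' is not among the remaining clusters
  have hnotmem : C ∪ C' ∉ (P.erase C).erase C' := by
    intro h
    have hmem : C ∪ C' ∈ P := Finset.mem_of_mem_erase (Finset.mem_of_mem_erase h)
    have hneC : C ∪ C' ≠ C := (Finset.mem_erase.mp (Finset.mem_of_mem_erase h)).1
    have hdis := hdisj (C ∪ C') hmem C hC hneC
    obtain ⟨i₀, hi₀⟩ := hne C hC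
    exact (Finset.disjoint_left.mp hdis (Finset.mem_union_left _ hi₀)) hi₀
  refine ⟨⟨?_, ?_, ?_, ?_⟩, ?_⟩
  · intro A hA
    rcases Finset.mem_insert.mp hA with rfl | hA
    · obtain ⟨i₀, hi₀⟩ := hne C hC
      exact ⟨i₀, Finset.mem_union_left _ hi₀⟩
    · exact hne A (Finset.mem_of_mem_erase (Finset.mem_of_mem_erase hA))
  · intro i
    obtain ⟨A, hA, hiA⟩ := hcov i
    by_cases hAC : A = C
    · exact ⟨C ∪ C', Finset.mem_insert_self _ _, Finset.mem_union_left _ (hAC ▸ hiA)⟩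
    by_cases hAC' : A = C'
    · exact ⟨C ∪ C', Finset.mem_insert_self _ _, Finset.mem_union_right _ (hAC' ▸ hiA)⟩
    · exact ⟨A, Finset.mem_insert_of_mem (Finset.mem_erase.mpr ⟨hAC',
        Finset.mem_erase.mpr ⟨hAC, hA⟩⟩), hiA⟩
  · intro A hA B hB hAB
    have elem : ∀ E ∈ (P.erase C).erase C', E ∈ P ∧ E ≠ C ∧ E ≠ C' := by
      intro E hE
      exact ⟨Finset.mem_of_mem_erase (Finset.mem_of_mem_erase hE),
        (Finset.mem_erase.mp (Finset.mem_of_mem_erase hE)).1,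
        (Finset.mem_erase.mp hE).1⟩
    rcases Finset.mem_insert.mp hA with rfl | hA
    · rcases Finset.mem_insert.mp hB with rfl | hB
      · exact absurd rfl hAB
      · obtain ⟨hBP, hBC, hBC'⟩ := elem B hB
        exact Finset.disjoint_union_left.mpr
          ⟨(hdisj B hBP C hC hBC).symm, (hdisj B hBP C' hC' hBC').symm⟩
    · rcases Finset.mem_insert.mp hB with rfl | hB
      · obtain ⟨hAP, hAC, hAC'⟩ := elem A hA
        exact Finset.disjoint_union_right.mpr
          ⟨hdisj A hAP C hC hAC, hdisj A hAP C' hC' hAC'⟩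
      · exact hdisj A (elem A hA).1 B (elem B hB).1 hAB
  · intro A hA
    rcases Finset.mem_insert.mp hA with rfl | hA
    · exact ⟨k₁, hUsub⟩
    · exact href A (Finset.mem_of_mem_erase (Finset.mem_of_mem_erase hA))
  · rw [Finset.card_insert_of_notMem hnotmem,
      Finset.card_erase_of_mem hC'e, Finset.card_erase_of_mem hC]
    have h2 : 2 ≤ P.card := Finset.one_lt_card.mpr ⟨C, hC, C', hC', hCC'⟩
    omega

theorem goodPart_chain {n K₀ : ℕ} (hn : 1 ≤ n)
    (d : Fin n → Fin n → ℝ)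
    (G : Fin K₀ → Finset (Fin n)) (hG : IsGroupPartition G)
    (hsep : IsSeparated d G)
    (P : ℕ → Finset (Finset (Fin n))) (hP : IsHACChain d P)
    (K : ℕ) (hK₁ : K₀ < K) (hK₂ : K ≤ n) :
    ∀ r, r ≤ n - K → GoodPart G (P r) ∧ (P r).card = n - r := by
  intro r
  induction r with
  | zero =>
    intro _
    obtain ⟨hg, hc⟩ := goodPart_singleton G hG
    rw [hP.1]
    exact ⟨hg, by omega⟩
  | succ r ih =>
    intro hr
    obtain ⟨hg, hc⟩ := ih (by omega)
    have hstep : IsMergeStep d (P r) (P (r + 1)) := hP.2 r (by omega)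
    have hcard : K₀ < (P r).card := by omega
    obtain ⟨hg', hc'⟩ := goodPart_merge d G hG hsep (P r) (P (r + 1)) hg hcard hstep
    exact ⟨hg', by omega⟩

/-- **Deterministic core of Theorem 1(b).** If the group partition is `d`-separated, then
for every tie-breaking and every integer `K` with `K₀ < K ≤ n`, the HAC partition into
`K` clusters is a refinement of the group partition. -/
theorem hac_refinement_above {n K₀ : ℕ} (hn : 1 ≤ n)
    (d : Fin n → Fin n → ℝ) (hsym : ∀ i j, d i j = d j i)
    (G : Fin K₀ → Finset (Fin n)) (hG : IsGroupPartition G)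
    (hsep : IsSeparated d G)
    (P : ℕ → Finset (Finset (Fin n))) (hP : IsHACChain d P)
    (K : ℕ) (hK₁ : K₀ < K) (hK₂ : K ≤ n) :
    IsRefinement (P (n - K)) (Finset.univ.image G) := by
  obtain ⟨⟨_, _, _, href⟩, _⟩ :=
    goodPart_chain hn d G hG hsep P hP K hK₁ hK₂ (n - K) le_rfl
  intro C hC
  obtain ⟨k, hk⟩ := href C hC
  exact ⟨G k, Finset.mem_image_of_mem G (Finset.mem_univ k), hk⟩
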